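/- Let H : [0, ∞) → ℝ be differentiable, bounded below by 0, and suppose w1 : [0, ∞) → ℝ is C¹ with w1(t) > 0 on [0, T), lim_{t→T} w1(t) = 0 for some finite T > 0, and H'(t) ≤ -(k/w1(t)²)·(w1'(t))² for all t ∈ [0,T) with k > 0. Then for any t1 ∈ [0, T), choosing t' ∈ [t1, T] where w1 attains its maximum on [t1, T], we have H(T) - H(t') ≤ -k/(T - t'). Consequently no such T exists: w1 cannot reach zero in finite time. -/

import Mathlib

open Filter Set

/-- Finite-time non-escape (Lemma 2): if `H` is differentiable and bounded below
by `0` on `[0,∞)`, `w1` is `C¹` and positive on `[0,T)` with `w1(t) → 0` as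
`t → T` for some finite `T > 0`, and `H' ≤ -(k/w1²)·(w1')²` on `[0,T)` with
`k > 0`, then a contradiction follows: `w1` cannot reach zero in finite time. -/
theorem stmt_10 (H w1 : ℝ → ℝ) (k T : ℝ) (hk : 0 < k) (hT : 0 < T)
    (hH : Differentiable ℝ H) (hH0 : ∀ t, 0 ≤ t → 0 ≤ H t)
    (hw1 : ContDiff ℝ 1 w1)
    (hpos : ∀ t, 0 ≤ t → t < T → 0 < w1 t)
    (hlim : Tendsto w1 (nhdsWithin T (Iio T)) (nhds 0))
    (hdiss : ∀ t, 0 ≤ t → t < T →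
      deriv H t ≤ -(k / (w1 t) ^ 2) * (deriv w1 t) ^ 2) :
    False := by
  have hw1d : Differentiable ℝ w1 := hw1.differentiable one_ne_zero
  set χ : ℝ → ℝ := fun s => H s - k * Real.log (w1 s) - (k/4) * s with hχdef
  -- χ is antitone on [0, T)
  have hanti : AntitoneOn χ (Ico 0 T) := by
    apply antitoneOn_of_deriv_nonpos (convex_Ico 0 T)
    · apply ContinuousOn.sub
      apply ContinuousOn.sub hH.continuous.continuousOn
      · exact (continuousOn_const.mul ((hw1.continuous.continuousOn).log
          (fun s hs => ne_of_gt (hpos s hs.1 hs.2))))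
      · exact (continuousOn_const.mul continuousOn_id)
    · intro x hx
      rw [interior_Ico] at hx
      have hne : w1 x ≠ 0 := ne_of_gt (hpos x hx.1.le hx.2)
      have h3 : HasDerivAt (fun s => Real.log (w1 s)) (deriv w1 x / w1 x) x :=
        (hw1d x).hasDerivAt.log hne
      exact (((hH x).hasDerivAt.sub (h3.const_mul k)).sub
        ((hasDerivAt_id x).const_mul (k/4))).differentiableAt.differentiableWithinAt
    · intro x hx
      rw [interior_Ico] at hx
      have hwx := hpos x hx.1.le hx.2
      have hne : w1 x ≠ 0 := ne_of_gt hwx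
      have h3 : HasDerivAt (fun s => Real.log (w1 s)) (deriv w1 x / w1 x) x :=
        (hw1d x).hasDerivAt.log hne
      have hχ' : HasDerivAt χ
          (deriv H x - k * (deriv w1 x / w1 x) - k/4 * 1) x :=
        ((hH x).hasDerivAt.sub (h3.const_mul k)).sub ((hasDerivAt_id x).const_mul (k/4))
      rw [hχ'.deriv]
      have hd := hdiss x hx.1.le hx.2
      have hq : -(k / (w1 x) ^ 2) * (deriv w1 x) ^ 2
          = -k * (deriv w1 x / w1 x) ^ 2 := by
        field_simp
      rw [hq] at hd
      set q := deriv w1 x / w1 x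
      nlinarith [sq_nonneg (q + 1/2), hk.le]
  -- lower bound on w1 on [0, T)
  set c : ℝ := Real.log (w1 0) - H 0 / k - T / 4 with hc
  have hlb : ∀ t, 0 ≤ t → t < T → Real.exp c ≤ w1 t := by
    intro t ht htT
    have h0 : (0:ℝ) ∈ Ico (0:ℝ) T := ⟨le_rfl, hT⟩
    have hmem : t ∈ Ico (0:ℝ) T := ⟨ht, htT⟩
    have hle := hanti h0 hmem ht
    have hHt := hH0 t ht
    have hlog : c ≤ Real.log (w1 t) := by
      have hχt : H t - k * Real.log (w1 t) - (k/4) * t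
          ≤ H 0 - k * Real.log (w1 0) - (k/4) * 0 := hle
      have h1 : k * (Real.log (w1 0) - H 0 / k - T / 4) ≤ k * Real.log (w1 t) := by
        have hkt : (k/4) * t ≤ (k/4) * T := by nlinarith
        have hdk : H 0 / k * k = H 0 := div_mul_cancel₀ _ hk.ne'
        have : k * Real.log (w1 0) - H 0 / k * k - k / 4 * T ≤ k * Real.log (w1 t) := by
          nlinarith
        calc k * (Real.log (w1 0) - H 0 / k - T / 4)
            = k * Real.log (w1 0) - H 0 / k * k - k / 4 * T := by ring
          _ ≤ k * Real.log (w1 t) := this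
      exact le_of_mul_le_mul_left h1 hk
    calc Real.exp c ≤ Real.exp (Real.log (w1 t)) := Real.exp_le_exp.2 hlog
      _ = w1 t := Real.exp_log (hpos t ht htT)
  -- contradiction with the limit
  have h1 : ∀ᶠ t in nhdsWithin T (Iio T), w1 t < Real.exp c :=
    hlim.eventually (eventually_lt_nhds (Real.exp_pos c))
  have h2 : ∀ᶠ t in nhdsWithin T (Iio T), 0 < t :=
    eventually_nhdsWithin_of_eventually_nhds (eventually_gt_nhds hT)
  have h3 : ∀ᶠ t in nhdsWithin T (Iio T), t < T := eventually_mem_nhdsWithin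
  obtain ⟨t, ht1, ht2, ht3⟩ := (h1.and (h2.and h3)).exists
  exact absurd (hlb t ht2.le ht3) (not_le.2 ht1)
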